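/- For each degree d ≥ 0, the u^d-coefficient of a_{k,(1,1),ℓ}(u) is eventually constant as ℓ → ∞, and the resulting limit formal power series α_{k,(1,1)}(u) ∈ ℚ[[u]] satisfies α_{k,(1,1)}(u) = −(q²−1)u · (1 − Σ_{i=1}^{k}(q−1)q^{3i}u^{3i})⁻¹, where the inverse is taken in ℚ[[u]] (the series inverted has constant term 1). -/

import Mathlib

open Polynomial in
/-- `aP q k ℓ s t = a_{k,(s,t),ℓ}(u) ∈ ℚ[u]` (with the junk value `0` at `ℓ = 0`). -/
noncomputable def aP (q k : ℕ) : ℕ → ℕ → ℕ → ℚ[X]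
  | 0, _, _ => 0
  | 1, s, t =>
      if s = 1 ∧ t = 1 then -C ((q : ℚ) ^ 2 - 1) * X
      else if s = t then -C ((q : ℚ) - 1) * X
      else 0
  | ℓ + 2, s, t =>
      if s = 1 ∧ t = 1 then
        -C ((q : ℚ) ^ 2 - 1) * X +
          ∑ i ∈ Finset.Icc 1 k,
            C (((q : ℚ) - 1) * (q : ℚ) ^ (2 * i + 1)) * X ^ (i + 2) * aP q k (ℓ + 1) i 1
      else if s = 1 then
        -C (((q : ℚ) - 1) * (q : ℚ) ^ (2 * t - 1)) * X ^ t +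
          ∑ i ∈ Finset.Icc 1 k,
            C (((q : ℚ) - 1) * (q : ℚ) ^ (2 * i + 1)) * X ^ (i + 2) * aP q k (ℓ + 1) i t
      else if s = t then
        -C ((q : ℚ) - 1) * X + C (q : ℚ) * X ^ 2 * aP q k (ℓ + 1) (s - 1) t
      else C (q : ℚ) * X ^ 2 * aP q k (ℓ + 1) (s - 1) t

noncomputable def Sps (q k : ℕ) : PowerSeries ℚ :=
  ∑ i ∈ Finset.Icc 1 k,
    PowerSeries.C (R := ℚ) (((q : ℚ) - 1) * (q : ℚ) ^ (3 * i)) * PowerSeries.X ^ (3 * i)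

noncomputable def alphaPS (q k : ℕ) : PowerSeries ℚ :=
  -(PowerSeries.C (R := ℚ) ((q : ℚ) ^ 2 - 1)) * PowerSeries.X * (1 - Sps q k)⁻¹

section
open Polynomial

lemma aP_step (q k ℓ i : ℕ) (hi : 1 ≤ i) :
    aP q k (ℓ + 1) (i + 1) 1 = C (q : ℚ) * X ^ 2 * aP q k ℓ i 1 := by
  match ℓ with
  | 0 =>
    have h1 : aP q k 1 (i + 1) 1 = 0 := by
      simp only [aP]
      rw [if_neg (by omega), if_neg (by omega)]
    rw [h1, aP]
    ring
  | m + 1 =>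
    show aP q k (m + 2) (i + 1) 1 = _
    rw [aP]
    rw [if_neg (by omega), if_neg (by omega), if_neg (by omega)]
    simp

lemma aP_shift (q k : ℕ) (i : ℕ) : ∀ m : ℕ,
    aP q k (m + i) (i + 1) 1 = C ((q : ℚ) ^ i) * X ^ (2 * i) * aP q k m 1 1 := by
  induction i with
  | zero => intro m; simp
  | succ j ih =>
    intro m
    rw [show m + (j + 1) = (m + j) + 1 from by omega,
      aP_step q k (m + j) (j + 1) (by omega), ih m,
      show ((q : ℚ)) ^ (j + 1) = (q : ℚ) ^ j * q from pow_succ _ _, C_mul,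
      show 2 * (j + 1) = 2 * j + 2 from by ring, pow_add]
    ring

lemma aP_rec (q k ℓ : ℕ) (hk : 1 ≤ k) (hℓ : k ≤ ℓ + 2) :
    aP q k (ℓ + 2) 1 1 = -C ((q : ℚ) ^ 2 - 1) * X +
      ∑ i ∈ Finset.Icc 1 k,
        C (((q : ℚ) - 1) * (q : ℚ) ^ (3 * i)) * X ^ (3 * i) * aP q k (ℓ + 2 - i) 1 1 := by
  rw [aP]
  rw [if_pos ⟨rfl, rfl⟩]
  congr 1
  apply Finset.sum_congr rfl
  intro i hi
  simp only [Finset.mem_Icc] at hi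
  obtain ⟨hi1, hi2⟩ := hi
  obtain ⟨j, rfl⟩ : ∃ j, i = j + 1 := ⟨i - 1, by omega⟩
  rw [show ℓ + 1 = (ℓ + 1 - j) + j from by omega, aP_shift q k j (ℓ + 1 - j)]
  rw [show ℓ + 1 - j = ℓ + 2 - (j + 1) from by omega]
  rw [show (C (((q : ℚ) - 1) * (q : ℚ) ^ (2 * (j + 1) + 1)) * X ^ (j + 1 + 2) *
        (C ((q : ℚ) ^ j) * X ^ (2 * j) * aP q k (ℓ + 2 - (j + 1)) 1 1)) =
      (C (((q : ℚ) - 1) * (q : ℚ) ^ (2 * (j + 1) + 1)) * C ((q : ℚ) ^ j)) *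
        (X ^ (j + 1 + 2) * X ^ (2 * j)) * aP q k (ℓ + 2 - (j + 1)) 1 1 from by ring,
    ← C_mul, ← pow_add]
  congr 2
  · rw [mul_assoc, ← pow_add, show 2 * (j + 1) + 1 + j = 3 * (j + 1) from by ring]
  · rw [show j + 1 + 2 + 2 * j = 3 * (j + 1) from by ring]

lemma constCoeff_Sps (q k : ℕ) : PowerSeries.constantCoeff (R := ℚ) (Sps q k) = 0 := by
  rw [Sps, map_sum]
  apply Finset.sum_eq_zero
  intro i hi
  simp only [Finset.mem_Icc] at hi
  rw [map_mul, map_pow, PowerSeries.constantCoeff_X, zero_pow (by omega), mul_zero]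

lemma alphaPS_eq (q k : ℕ) :
    alphaPS q k = -(PowerSeries.C (R := ℚ) ((q : ℚ) ^ 2 - 1)) * PowerSeries.X +
      Sps q k * alphaPS q k := by
  have hv : (1 - Sps q k) * (1 - Sps q k)⁻¹ = 1 := by
    apply PowerSeries.mul_inv_cancel
    rw [map_sub, map_one, constCoeff_Sps, sub_zero]
    exact one_ne_zero
  rw [alphaPS]
  linear_combination (-(PowerSeries.C (R := ℚ) ((q : ℚ) ^ 2 - 1)) * PowerSeries.X) * hv

lemma aP_main (q k : ℕ) (hk : 1 ≤ k) : ∀ ℓ d : ℕ, d + k ≤ ℓ →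
    (aP q k ℓ 1 1).coeff d = PowerSeries.coeff (R := ℚ) d (alphaPS q k) := by
  intro ℓ
  induction ℓ using Nat.strong_induction_on with
  | _ ℓ IH =>
    match ℓ with
    | 0 => intro d hd; omega
    | 1 =>
      intro d hd
      have hd0 : d = 0 := by omega
      subst hd0
      have h1 : aP q k 1 1 1 = -C ((q : ℚ) ^ 2 - 1) * X := by
        rw [aP]; rw [if_pos ⟨rfl, rfl⟩]
      rw [h1]
      have h2 : (PowerSeries.coeff (R := ℚ) 0) (alphaPS q k) = 0 := by
        rw [alphaPS, PowerSeries.coeff_zero_eq_constantCoeff, map_mul, map_mul,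
          PowerSeries.constantCoeff_X, mul_zero, zero_mul]
      rw [h2]
      simp
    | m + 2 =>
      intro d hd
      rw [aP_rec q k m hk (by omega), alphaPS_eq q k]
      rw [coeff_add, map_add]
      congr 1
      · rw [neg_mul, neg_mul, Polynomial.coeff_neg, map_neg, Polynomial.coeff_C_mul,
          PowerSeries.coeff_C_mul, Polynomial.coeff_X, PowerSeries.coeff_X]
        simp [eq_comm]
      · rw [Sps, Finset.sum_mul, finset_sum_coeff, map_sum]
        apply Finset.sum_congr rfl
        intro i hi
        simp only [Finset.mem_Icc] at hi
        obtain ⟨hi1, hi2⟩ := hi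
        rw [show (C (((q : ℚ) - 1) * (q : ℚ) ^ (3 * i)) * X ^ (3 * i) *
              aP q k (m + 2 - i) 1 1 : ℚ[X]) =
            C (((q : ℚ) - 1) * (q : ℚ) ^ (3 * i)) * (aP q k (m + 2 - i) 1 1 * X ^ (3 * i))
            by ring]
        rw [show (PowerSeries.C (R := ℚ) (((q : ℚ) - 1) * (q : ℚ) ^ (3 * i)) *
              PowerSeries.X ^ (3 * i) * alphaPS q k) =
            PowerSeries.C (R := ℚ) (((q : ℚ) - 1) * (q : ℚ) ^ (3 * i)) *
              (alphaPS q k * PowerSeries.X ^ (3 * i)) by ring]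
        rw [coeff_C_mul, PowerSeries.coeff_C_mul, Polynomial.coeff_mul_X_pow',
          PowerSeries.coeff_mul_X_pow']
        congr 1
        rcases le_or_gt (3 * i) d with h | h
        · rw [if_pos h, if_pos h]
          exact IH (m + 2 - i) (by omega) (d - 3 * i) (by omega)
        · rw [if_neg (by omega), if_neg (by omega)]

end

open PowerSeries in
theorem aP_one_one_tendsto (q k : ℕ) (hq : 2 ≤ q) (hk : 1 ≤ k) :
    ∀ d : ℕ, ∃ L : ℕ, ∀ ℓ : ℕ, L ≤ ℓ → 1 ≤ ℓ →
      (aP q k ℓ 1 1).coeff d =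
        PowerSeries.coeff (R := ℚ) d
          (-(C (R := ℚ) ((q : ℚ) ^ 2 - 1)) * X *
            (1 - ∑ i ∈ Finset.Icc 1 k,
                C (R := ℚ) (((q : ℚ) - 1) * (q : ℚ) ^ (3 * i)) * X ^ (3 * i))⁻¹) := by
  intro d
  refine ⟨d + k, fun ℓ hL _ => ?_⟩
  exact aP_main q k hk ℓ d hL
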